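/- arXiv:2208.12084 — 4 statements merged into one kernel-verified Lean document; each statement's English description precedes it below -/
import Mathlib

section
/- Let k be a universal kernel on [0,1] with feature map φ into its RKHS H, and let q ≥ 1. Define V := f(X) conditioned on g(X) = 1 and S-MMCE(f,g;q,k,P) := ‖E[|E[Y|V] − V|^q φ(V)]‖_H^{1/q}. Then S-MMCE(f,g;q,k,P) = 0 if and only if (f,g) is almost surely selectively calibrated, i.e., P(E[Y | V] = V) = 1. -/
open MeasureTheory ProbabilityTheory
open scoped RealInnerProductSpace

/-- **Faithfulness of S-MMCE.** Let `k` be a (continuous) universal kernel on `[0,1]`,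
given via its feature map `φ` into its RKHS `H` (universality: functions `r ↦ ⟪φ r, h⟫`
are dense in the continuous functions on `[0,1]` w.r.t. the sup norm), and let `q ≥ 1`.
With `ν` the conditional law given `g(X) = 1`, `V := f(X)` and
`S-MMCE := ‖E_ν[|E_ν[Y|V] − V|^q φ(V)]‖^{1/q}`, we have `S-MMCE = 0` iff `(f, g)` is
almost surely selectively calibrated, i.e. `E_ν[Y | f(X)] = f(X)` `ν`-a.s. -/
theorem smmce_faithful
    {Ω : Type*} [MeasurableSpace Ω] (μ : Measure Ω) [IsProbabilityMeasure μ]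
    {H : Type*} [NormedAddCommGroup H] [InnerProductSpace ℝ H] [CompleteSpace H]
    (φ : ℝ → H) (hφ : Continuous φ)
    (huniv : ∀ c : ℝ → ℝ, ContinuousOn c (Set.Icc (0:ℝ) 1) → ∀ ε > 0,
      ∃ h : H, ∀ r ∈ Set.Icc (0:ℝ) 1, |c r - ⟪φ r, h⟫| < ε)
    (f Y : Ω → ℝ) (g : Ω → Bool)
    (hf : Measurable f) (hY : Measurable Y) (hg : Measurable g)
    (hfr : ∀ ω, f ω ∈ Set.Icc (0:ℝ) 1) (hYr : ∀ ω, Y ω = 0 ∨ Y ω = 1)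
    (hcov : 0 < μ {ω | g ω = true})
    (q : ℝ) (hq : 1 ≤ q) :
    (‖∫ ω, |MeasureTheory.condExp (MeasurableSpace.comap f inferInstance)
          (ProbabilityTheory.cond μ {ω | g ω = true}) Y ω - f ω| ^ q • φ (f ω)
        ∂(ProbabilityTheory.cond μ {ω | g ω = true})‖ ^ (1/q) = 0)
    ↔ (MeasureTheory.condExp (MeasurableSpace.comap f inferInstance)
          (ProbabilityTheory.cond μ {ω | g ω = true}) Y
        =ᵐ[ProbabilityTheory.cond μ {ω | g ω = true}] f) := by
  have hq0 : q ≠ 0 := by linarith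
  set ν : Measure Ω := ProbabilityTheory.cond μ {ω | g ω = true} with hν_def
  haveI : IsProbabilityMeasure ν := cond_isProbabilityMeasure hcov.ne'
  set h : Ω → ℝ := MeasureTheory.condExp (MeasurableSpace.comap f inferInstance) ν Y with hh_def
  have hm : MeasurableSpace.comap f inferInstance ≤ (inferInstance : MeasurableSpace Ω) := hf.comap_le
  have hhm : Measurable h := (stronglyMeasurable_condExp.mono hm).measurable
  set W : Ω → ℝ := fun ω => |h ω - f ω| ^ q with hW_def
  have hWm : Measurable W :=
    (Real.continuous_rpow_const (by linarith)).measurable.comp ((hhm.sub hf).abs)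
  have hW0 : ∀ ω, 0 ≤ W ω := fun ω => Real.rpow_nonneg (abs_nonneg _) q
  -- Y is integrable and bounded in [0,1]
  have hY01 : ∀ ω, Y ω ∈ Set.Icc (0:ℝ) 1 := by
    intro ω; rcases hYr ω with h1 | h1 <;> rw [h1] <;> constructor <;> norm_num
  have hYint : Integrable Y ν := by
    refine ⟨hY.aestronglyMeasurable, ?_⟩
    refine HasFiniteIntegral.of_bounded (C := 1) (ae_of_all _ fun ω => ?_)
    rw [Real.norm_eq_abs, abs_le]
    exact ⟨by linarith [(hY01 ω).1], (hY01 ω).2⟩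
  -- a.e. bound on h and on W
  have hh0 : 0 ≤ᵐ[ν] h := condExp_nonneg (ae_of_all _ fun ω => (hY01 ω).1)
  have hh1 : h ≤ᵐ[ν] fun _ => (1:ℝ) := by
    have := condExp_mono (μ := ν) (m := MeasurableSpace.comap f inferInstance) hYint (integrable_const (1:ℝ))
      (ae_of_all _ fun ω => (hY01 ω).2)
    rw [condExp_const hm] at this
    exact this
  have hW1 : ∀ᵐ ω ∂ν, W ω ≤ 1 := by
    filter_upwards [hh0, hh1] with ω h0 h1
    simp only [Pi.zero_apply] at h0
    refine Real.rpow_le_one (abs_nonneg _) ?_ (by linarith)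
    rw [abs_le]
    exact ⟨by linarith [(hfr ω).2], by linarith [(hfr ω).1]⟩
  constructor
  · -- forward
    intro hnorm
    -- bound on φ on [0,1]
    obtain ⟨M, hM⟩ := (isCompact_Icc : IsCompact (Set.Icc (0:ℝ) 1)).exists_bound_of_continuousOn
      hφ.continuousOn
    have hM0 : 0 ≤ M := le_trans (norm_nonneg _) (hM 0 ⟨le_refl _, by norm_num⟩)
    have hφsm : StronglyMeasurable (fun ω => φ (f ω)) :=
      hφ.comp_stronglyMeasurable hf.stronglyMeasurable
    have hIntg : Integrable (fun ω => W ω • φ (f ω)) ν := by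
      refine Integrable.mono' (integrable_const M)
        (hWm.stronglyMeasurable.smul hφsm).aestronglyMeasurable ?_
      filter_upwards [hW1] with ω h1
      rw [norm_smul, Real.norm_eq_abs, abs_of_nonneg (hW0 ω)]
      calc W ω * ‖φ (f ω)‖ ≤ 1 * M :=
            mul_le_mul h1 (hM _ (hfr ω)) (norm_nonneg _) zero_le_one
        _ = M := one_mul M
    have hWint : Integrable W ν := by
      refine Integrable.mono' (integrable_const 1) hWm.aestronglyMeasurable ?_
      filter_upwards [hW1] with ω h1
      rwa [Real.norm_eq_abs, abs_of_nonneg (hW0 ω)]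
    -- integral vector is zero
    have hI0 : (∫ ω, W ω • φ (f ω) ∂ν) = 0 := by
      have : ‖∫ ω, W ω • φ (f ω) ∂ν‖ = 0 := by
        have := hnorm
        rw [Real.rpow_eq_zero (norm_nonneg _) (by positivity : 1/q ≠ 0)] at this
        exact this
      exact norm_eq_zero.mp this
    -- ∫ W = 0
    have hWle1 : (∫ ω, W ω ∂ν) ≤ 1 := by
      calc (∫ ω, W ω ∂ν) ≤ ∫ _ω, (1:ℝ) ∂ν := integral_mono_ae hWint (integrable_const 1) hW1
        _ = 1 := by simp
    have hWI0 : (∫ ω, W ω ∂ν) = 0 := by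
      have hnn : 0 ≤ ∫ ω, W ω ∂ν := integral_nonneg hW0
      by_contra hne
      have hpos : 0 < ∫ ω, W ω ∂ν := lt_of_le_of_ne hnn (Ne.symm hne)
      set ε : ℝ := (∫ ω, W ω ∂ν) / 2 with hε_def
      have hεpos : 0 < ε := by positivity
      obtain ⟨v, hv⟩ := huniv (fun _ => 1) continuousOn_const ε hεpos
      have hIv : Integrable (fun ω => W ω * ⟪φ (f ω), v⟫) ν := by
        have := Integrable.inner_const (𝕜 := ℝ) hIntg v
        refine this.congr (ae_of_all _ fun ω => ?_)
        simp only [real_inner_smul_left]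
      have hprod : Integrable (fun ω => W ω * (1 - ⟪φ (f ω), v⟫)) ν := by
        refine (hWint.sub hIv).congr (ae_of_all _ fun ω => ?_)
        simp only [Pi.sub_apply]
        ring
      have hproj : (∫ ω, W ω * ⟪φ (f ω), v⟫ ∂ν) = 0 := by
        have h1 := integral_inner (𝕜 := ℝ) hIntg v
        rw [hI0, inner_zero_right] at h1
        rw [← h1]
        congr 1; funext ω
        rw [real_inner_smul_right, real_inner_comm]
      have key : (∫ ω, W ω ∂ν) = ∫ ω, W ω * (1 - ⟪φ (f ω), v⟫) ∂ν := by
        have : (∫ ω, W ω * (1 - ⟪φ (f ω), v⟫) ∂ν)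
            = (∫ ω, W ω ∂ν) - ∫ ω, W ω * ⟪φ (f ω), v⟫ ∂ν := by
          rw [← integral_sub hWint hIv]
          congr 1; funext ω; ring
        rw [this, hproj, sub_zero]
      have hcontr : (∫ ω, W ω ∂ν) ≤ ε := by
        calc (∫ ω, W ω ∂ν) = ∫ ω, W ω * (1 - ⟪φ (f ω), v⟫) ∂ν := key
          _ ≤ ∫ ω, W ω * ε ∂ν := by
              refine integral_mono hprod (hWint.mul_const ε) fun ω => ?_
              refine mul_le_mul_of_nonneg_left ?_ (hW0 ω)
              exact le_of_lt (lt_of_le_of_lt (le_abs_self _) (hv _ (hfr ω)))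
          _ = (∫ ω, W ω ∂ν) * ε := integral_mul_const ε W
          _ ≤ 1 * ε := mul_le_mul_of_nonneg_right hWle1 hεpos.le
          _ = ε := one_mul ε
      rw [hε_def] at hcontr
      linarith
    -- conclude W = 0 a.e., hence h = f a.e.
    have hWae : W =ᵐ[ν] 0 :=
      (integral_eq_zero_iff_of_nonneg hW0 hWint).mp hWI0
    filter_upwards [hWae] with ω hω
    have : |h ω - f ω| = 0 := by
      rw [Pi.zero_apply] at hω
      exact (Real.rpow_eq_zero (abs_nonneg _) hq0).mp hω
    have := abs_eq_zero.mp this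
    linarith
  · -- backward
    intro hcal
    have : (∫ ω, W ω • φ (f ω) ∂ν) = 0 := by
      rw [← integral_zero Ω H (μ := ν)]
      refine integral_congr_ae ?_
      filter_upwards [hcal] with ω hω
      simp [hW_def, hω, Real.zero_rpow hq0]
    rw [this, norm_zero, Real.zero_rpow (by positivity : 1/q ≠ 0)]
end

section
/- For any kernel k on [0,1] with feature map φ, any q ≥ 1, and any (f,g) with P(g(X)=1) > 0, the selective maximum mean calibration error is bounded by S-MMCE(f,g;q,k,P) ≤ K^{1/(2q)} · S-BCE(f,g;q,P), where K := max_{α ∈ [0,1]} k(α,α). -/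
open MeasureTheory ProbabilityTheory
open scoped RealInnerProductSpace

/-- **Relationship of S-MMCE to S-BCE.** For any (continuous) kernel `k` on `[0,1]` with
feature map `φ` (so `k(α,α) = ⟪φ α, φ α⟫`), any `q ≥ 1`, and any `(f,g)` with
`P(g(X)=1) > 0`, letting `K := max_{α ∈ [0,1]} k(α,α)` (attained, expressed via
`IsGreatest`), we have `S-MMCE(f,g;q,k,P) ≤ K^{1/(2q)} · S-BCE(f,g;q,P)`. -/
theorem smmce_le_sbce
    {Ω : Type*} [MeasurableSpace Ω] (μ : Measure Ω) [IsProbabilityMeasure μ]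
    {H : Type*} [NormedAddCommGroup H] [InnerProductSpace ℝ H] [CompleteSpace H]
    (φ : ℝ → H) (hφ : Continuous φ)
    (K : ℝ) (hK : IsGreatest ((fun α => ⟪φ α, φ α⟫) '' Set.Icc (0:ℝ) 1) K)
    (f Y : Ω → ℝ) (g : Ω → Bool)
    (hf : Measurable f) (hY : Measurable Y) (hg : Measurable g)
    (hfr : ∀ ω, f ω ∈ Set.Icc (0:ℝ) 1) (hYr : ∀ ω, Y ω = 0 ∨ Y ω = 1)
    (hcov : 0 < μ {ω | g ω = true})
    (q : ℝ) (hq : 1 ≤ q) :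
    ‖∫ ω, |MeasureTheory.condExp (MeasurableSpace.comap f inferInstance)
          (ProbabilityTheory.cond μ {ω | g ω = true}) Y ω - f ω| ^ q • φ (f ω)
        ∂(ProbabilityTheory.cond μ {ω | g ω = true})‖ ^ (1/q)
      ≤ K ^ (1/(2*q)) *
        (∫ ω, |MeasureTheory.condExp (MeasurableSpace.comap f inferInstance)
            (ProbabilityTheory.cond μ {ω | g ω = true}) Y ω - f ω| ^ q
          ∂(ProbabilityTheory.cond μ {ω | g ω = true})) ^ (1/q) := by
  set ν := ProbabilityTheory.cond μ {ω | g ω = true} with hν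
  haveI : IsProbabilityMeasure ν := cond_isProbabilityMeasure hcov.ne'
  have hm : MeasurableSpace.comap f inferInstance ≤ (inferInstance : MeasurableSpace Ω) :=
    hf.comap_le
  set c := MeasureTheory.condExp (MeasurableSpace.comap f inferInstance) ν Y with hc
  set h : Ω → ℝ := fun ω => |c ω - f ω| ^ q with hh
  have hq0 : (0:ℝ) ≤ q := le_trans zero_le_one hq
  have hK0 : 0 ≤ K := by
    obtain ⟨α, -, hα⟩ := hK.1
    rw [← hα]
    exact real_inner_self_nonneg
  have hφbd : ∀ ω, ‖φ (f ω)‖ ≤ Real.sqrt K := by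
    intro ω
    have h1 : ⟪φ (f ω), φ (f ω)⟫ ≤ K := hK.2 ⟨f ω, hfr ω, rfl⟩
    rw [real_inner_self_eq_norm_sq] at h1
    exact (Real.le_sqrt (norm_nonneg _) hK0).2 h1
  have hh0 : ∀ ω, 0 ≤ h ω := fun ω => Real.rpow_nonneg (abs_nonneg _) q
  have hY01 : ∀ ω, 0 ≤ Y ω ∧ Y ω ≤ 1 := by
    intro ω; rcases hYr ω with h0 | h0 <;> simp [h0]
  have hYint : Integrable Y ν := by
    refine Integrable.mono' (integrable_const 1) hY.aestronglyMeasurable ?_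
    filter_upwards with ω
    rw [Real.norm_eq_abs, abs_le]
    exact ⟨by linarith [(hY01 ω).1], (hY01 ω).2⟩
  have hc0 : 0 ≤ᵐ[ν] c := condExp_nonneg (Filter.Eventually.of_forall fun ω => (hY01 ω).1)
  have hc1 : c ≤ᵐ[ν] fun _ => (1:ℝ) := by
    have h2 := condExp_mono (m := MeasurableSpace.comap f inferInstance) (μ := ν) hYint
      (integrable_const 1) (Filter.Eventually.of_forall fun ω => (hY01 ω).2)
    rwa [condExp_const hm] at h2
  have hle1 : ∀ᵐ ω ∂ν, h ω ≤ 1 := by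
    filter_upwards [hc0, hc1] with ω h0 h1
    have h0' : (0:ℝ) ≤ c ω := h0
    have h1' : c ω ≤ 1 := h1
    have habs : |c ω - f ω| ≤ 1 := by
      rw [abs_le]
      exact ⟨by linarith [(hfr ω).2], by linarith [(hfr ω).1]⟩
    calc |c ω - f ω| ^ q ≤ 1 ^ q := Real.rpow_le_rpow (abs_nonneg _) habs hq0
      _ = 1 := Real.one_rpow q
  have hcm : Measurable c := (stronglyMeasurable_condExp.mono hm).measurable
  have hhm : Measurable h := ((hcm.sub hf).abs).pow measurable_const
  have hint : Integrable h ν := by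
    refine Integrable.mono' (integrable_const 1) hhm.aestronglyMeasurable ?_
    filter_upwards [hle1] with ω hω
    rw [Real.norm_eq_abs, abs_of_nonneg (hh0 ω)]; exact hω
  have hb0 : 0 ≤ ∫ ω, h ω ∂ν := integral_nonneg hh0
  have hmain : ‖∫ ω, h ω • φ (f ω) ∂ν‖ ≤ Real.sqrt K * ∫ ω, h ω ∂ν := by
    calc ‖∫ ω, h ω • φ (f ω) ∂ν‖ ≤ ∫ ω, ‖h ω • φ (f ω)‖ ∂ν :=
          norm_integral_le_integral_norm _
      _ ≤ ∫ ω, Real.sqrt K * h ω ∂ν := by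
          refine integral_mono_of_nonneg ?_ (hint.const_mul _) ?_
          · filter_upwards with ω; exact norm_nonneg _
          · filter_upwards with ω
            rw [norm_smul, Real.norm_eq_abs, abs_of_nonneg (hh0 ω)]
            calc h ω * ‖φ (f ω)‖ ≤ h ω * Real.sqrt K :=
                  mul_le_mul_of_nonneg_left (hφbd ω) (hh0 ω)
              _ = Real.sqrt K * h ω := mul_comm _ _
      _ = Real.sqrt K * ∫ ω, h ω ∂ν := integral_const_mul _ _
  have hfin := Real.rpow_le_rpow (norm_nonneg _) hmain (by positivity : (0:ℝ) ≤ 1/q)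
  calc ‖∫ ω, h ω • φ (f ω) ∂ν‖ ^ (1/q)
      ≤ (Real.sqrt K * ∫ ω, h ω ∂ν) ^ (1/q) := hfin
    _ = Real.sqrt K ^ (1/q) * (∫ ω, h ω ∂ν) ^ (1/q) :=
        Real.mul_rpow (Real.sqrt_nonneg K) hb0
    _ = K ^ (1/(2*q)) * (∫ ω, h ω ∂ν) ^ (1/q) := by
        rw [Real.sqrt_eq_rpow, ← Real.rpow_mul hK0]
        congr 1
        ring_nf
end

section
/- Let g̃ : X → ℝ and let X₁,...,X_η be i.i.d. from P with g̃(X) having a continuous distribution. Let τ̂ := Threshold(ξ, {g̃(X₁),...,g̃(X_η)}) be the largest value τ such that at least a ξ-fraction of the η scores are ≥ τ. Then for every ε > 0, the probability (over the draw of X₁,...,X_η) that P(g̃(X) ≥ τ̂ | τ̂) ≤ ξ − ε is at most exp(−2ηε²). -/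
open Real
open MeasureTheory ProbabilityTheory


lemma denom_pos {p : ℝ} (hp0 : 0 ≤ p) (hp1 : p ≤ 1) (t : ℝ) :
    0 < 1 - p + p * Real.exp t := by
  rcases eq_or_lt_of_le hp0 with h | h
  · simp [← h]
  · have := mul_pos h (Real.exp_pos t)
    linarith

lemma bern_mgf_le {p : ℝ} (hp0 : 0 ≤ p) (hp1 : p ≤ 1) {t : ℝ} (ht : 0 ≤ t) :
    1 - p + p * Real.exp t ≤ Real.exp (t * p + t ^ 2 / 8) := by
  set d : ℝ → ℝ := fun t => 1 - p + p * Real.exp t with hd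
  have hden : ∀ s : ℝ, 0 < d s := denom_pos hp0 hp1
  have hA : ∀ s : ℝ, HasDerivAt d (p * Real.exp s) s := fun s =>
    ((Real.hasDerivAt_exp s).const_mul p).const_add (1 - p)
  have hlog : ∀ s : ℝ, HasDerivAt (fun u => Real.log (d u)) (p * Real.exp s / d s) s :=
    fun s => (hA s).log (ne_of_gt (hden s))
  set ψ : ℝ → ℝ := fun u => p + u / 4 - p * Real.exp u / d u with hψdef
  have hψ : ∀ s : ℝ, HasDerivAt ψ
      (1 / 4 - (p * Real.exp s * d s - p * Real.exp s * (p * Real.exp s)) / d s ^ 2) s := by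
    intro s
    have h1 : HasDerivAt (fun u : ℝ => p * Real.exp u) (p * Real.exp s) s :=
      (Real.hasDerivAt_exp s).const_mul p
    have h2 := h1.div (hA s) (ne_of_gt (hden s))
    have h3 : HasDerivAt (fun u : ℝ => p + u / 4) (1 / 4) s := by
      simpa using ((hasDerivAt_id s).div_const 4).const_add p
    exact h3.sub h2
  have hψ0 : ψ 0 = 0 := by
    simp only [hψdef, hd]
    rw [Real.exp_zero]
    field_simp
    ring
  have hψderiv_nonneg : ∀ s : ℝ, 0 ≤ 1 / 4 -
      (p * Real.exp s * d s - p * Real.exp s * (p * Real.exp s)) / d s ^ 2 := by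
    intro s
    have hds := hden s
    have key : (p * Real.exp s * d s - p * Real.exp s * (p * Real.exp s)) / d s ^ 2 ≤ 1 / 4 := by
      rw [div_le_iff₀ (by positivity)]
      simp only [hd]
      nlinarith [sq_nonneg (1 - p - p * Real.exp s), Real.exp_pos s]
    linarith
  have hψmono : MonotoneOn ψ (Set.Ici (0:ℝ)) := by
    apply monotoneOn_of_deriv_nonneg (convex_Ici 0)
    · exact fun x _ => (hψ x).differentiableAt.continuousAt.continuousWithinAt
    · exact fun x _ => (hψ x).differentiableAt.differentiableWithinAt
    · intro x _
      rw [(hψ x).deriv]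
      exact hψderiv_nonneg x
  have hψnonneg : ∀ s ∈ Set.Ici (0:ℝ), 0 ≤ ψ s := by
    intro s hs
    have := hψmono (Set.self_mem_Ici) hs hs
    rw [hψ0] at this
    exact this
  set φ : ℝ → ℝ := fun u => u * p + u ^ 2 / 8 - Real.log (d u) with hφdef
  have hφ : ∀ s : ℝ, HasDerivAt φ (ψ s) s := by
    intro s
    have h1 : HasDerivAt (fun u : ℝ => u * p + u ^ 2 / 8) (p + s / 4) s := by
      have := ((hasDerivAt_id s).mul_const p).add ((hasDerivAt_pow 2 s).div_const 8)
      exact this.congr_deriv (by ring)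
    exact h1.sub (hlog s)
  have hφmono : MonotoneOn φ (Set.Ici (0:ℝ)) := by
    apply monotoneOn_of_deriv_nonneg (convex_Ici 0)
    · exact fun x _ => (hφ x).differentiableAt.continuousAt.continuousWithinAt
    · exact fun x _ => (hφ x).differentiableAt.differentiableWithinAt
    · intro x hx
      rw [(hφ x).deriv]
      exact hψnonneg x (le_of_lt (by simpa using hx))
  have hφ0 : φ 0 = 0 := by simp [hφdef, hd]
  have hφt : 0 ≤ φ t := by
    have := hφmono Set.self_mem_Ici ht ht
    rwa [hφ0] at this
  have hlogle : Real.log (d t) ≤ t * p + t ^ 2 / 8 := by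
    simp only [hφdef] at hφt; linarith
  calc d t = Real.exp (Real.log (d t)) := (Real.exp_log (hden t)).symm
    _ ≤ Real.exp (t * p + t ^ 2 / 8) := Real.exp_le_exp.mpr hlogle

lemma iSup_Ici_bound (P : Measure ℝ) [IsProbabilityMeasure P] {u : ℝ}
    (c : ℕ → ℝ) (hc : Antitone c) (hcb : ∀ n, (P (Set.Ici (c n))).toReal ≤ u) :
    P (⋃ n, Set.Ici (c n)) ≤ ENNReal.ofReal u := by
  rw [Directed.measure_iUnion (Monotone.directed_le (fun n m hnm => Set.Ici_subset_Ici.mpr (hc hnm)))]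
  refine iSup_le fun n => ?_
  have h := hcb n
  have : P (Set.Ici (c n)) = ENNReal.ofReal ((P (Set.Ici (c n))).toReal) :=
    (ENNReal.ofReal_toReal (measure_ne_top _ _)).symm
  rw [this]
  exact ENNReal.ofReal_le_ofReal h

lemma tail_bound (P : Measure ℝ) [IsProbabilityMeasure P] (hP : ∀ x : ℝ, P {x} = 0)
    {u : ℝ} (hu : 0 ≤ u) :
    P {x | (P (Set.Ici x)).toReal ≤ u} ≤ ENNReal.ofReal u := by
  set A : Set ℝ := {x | (P (Set.Ici x)).toReal ≤ u} with hA
  have hup : ∀ x ∈ A, ∀ y, x ≤ y → y ∈ A := by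
    intro x hx y hxy
    exact le_trans (ENNReal.toReal_mono (measure_ne_top _ _)
      (measure_mono (Set.Ici_subset_Ici.mpr hxy))) hx
  rcases Set.eq_empty_or_nonempty A with hemp | hne
  · rw [hemp]; simp
  by_cases hbdd : BddBelow A
  · set a := sInf A with ha
    have hIoi : Set.Ioi a ⊆ A := by
      intro t ht
      obtain ⟨x, hxA, hxt⟩ := (csInf_lt_iff hbdd hne).mp ht
      exact hup x hxA t (le_of_lt hxt)
    have hsub : A ⊆ {a} ∪ Set.Ioi a := by
      intro x hx
      rcases eq_or_lt_of_le (csInf_le hbdd hx) with h | h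
      · exact Or.inl h.symm
      · exact Or.inr h
    have hioi : Set.Ioi a = ⋃ n : ℕ, Set.Ici (a + 1 / (n + 1)) := by
      ext x
      simp only [Set.mem_Ioi, Set.mem_iUnion, Set.mem_Ici]
      constructor
      · intro hx
        obtain ⟨n, hn⟩ := exists_nat_one_div_lt (sub_pos.mpr hx)
        exact ⟨n, by linarith⟩
      · rintro ⟨n, hn⟩
        have : (0:ℝ) < 1 / (n + 1) := by positivity
        linarith
    calc P A ≤ P ({a} ∪ Set.Ioi a) := measure_mono hsub
      _ ≤ P {a} + P (Set.Ioi a) := measure_union_le _ _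
      _ = P (Set.Ioi a) := by rw [hP a, zero_add]
      _ ≤ ENNReal.ofReal u := by
          rw [hioi]
          refine iSup_Ici_bound P _ ?_ ?_
          · intro n m hnm
            have h1 : (1:ℝ) / (m + 1) ≤ 1 / (n + 1) := by
              apply one_div_le_one_div_of_le (by positivity)
              have : (n:ℝ) ≤ m := Nat.cast_le.mpr hnm
              linarith
            linarith
          · intro n
            have : a + 1 / ((n:ℝ) + 1) ∈ A := hIoi (by
              simp only [Set.mem_Ioi]
              have : (0:ℝ) < 1 / ((n:ℝ) + 1) := by positivity
              linarith)
            exact this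
  · have huniv : A = Set.univ := by
      ext t
      simp only [Set.mem_univ, iff_true]
      rw [not_bddBelow_iff] at hbdd
      obtain ⟨x, hxA, hxt⟩ := hbdd t
      exact hup x hxA t (le_of_lt hxt)
    have huu : Set.univ = ⋃ n : ℕ, Set.Ici (-(n:ℝ)) := by
      ext x
      simp only [Set.mem_univ, true_iff, Set.mem_iUnion, Set.mem_Ici]
      obtain ⟨n, hn⟩ := exists_nat_ge (-x)
      exact ⟨n, by linarith⟩
    rw [huniv, huu]
    refine iSup_Ici_bound P _ ?_ ?_
    · intro n m hnm
      simp only [neg_le_neg_iff]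
      exact_mod_cast hnm
    · intro n
      have : (-(n:ℝ)) ∈ A := huniv ▸ Set.mem_univ _
      exact this
lemma pi_prod_integral {E : Type*} [MeasurableSpace E] (Q : Measure E) [IsProbabilityMeasure Q]
    (η : ℕ) (g : E → ℝ) :
    ∫ s : Fin η → E, ∏ i, g (s i) ∂(Measure.pi fun _ => Q) = (∫ x, g x ∂Q) ^ η := by
  letI : MeasureSpace E := ⟨Q⟩
  haveI : SigmaFinite (volume : Measure E) := inferInstanceAs (SigmaFinite Q)
  have := MeasureTheory.integral_fintype_prod_eq_pow (E := E) (ι := Fin η) g (μ := Q)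
  simpa [MeasureTheory.volume_pi, Fintype.card_fin] using this

lemma chernoff_pi (P : Measure ℝ) [IsProbabilityMeasure P]
    (η : ℕ) (hη : 0 < η) (A : Set ℝ) (hA : MeasurableSet A) (t : ℝ) (ht : 0 ≤ t) (c : ℝ) :
    (Measure.pi (fun _ : Fin η => P)
      {s | c ≤ ∑ i, A.indicator (fun _ => (1:ℝ)) (s i)}).toReal
      ≤ Real.exp (-t * c) *
        (1 - (P A).toReal + (P A).toReal * Real.exp t) ^ η := by
  set μ := Measure.pi (fun _ : Fin η => P) with hμ
  set Y : ℝ → ℝ := A.indicator (fun _ => (1:ℝ)) with hY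
  set W : (Fin η → ℝ) → ℝ := fun s => ∑ i, Y (s i) with hW
  have hYmeas : Measurable Y := measurable_const.indicator hA
  have hY01 : ∀ x, 0 ≤ Y x ∧ Y x ≤ 1 := by
    intro x
    simp only [hY]
    by_cases hx : x ∈ A <;> simp [Set.indicator_of_mem, Set.indicator_of_notMem, hx]
  have hWmeas : Measurable W := by
    apply Finset.measurable_sum
    exact fun i _ => hYmeas.comp (measurable_pi_apply i)
  have hWle : ∀ s, W s ≤ η := by
    intro s
    calc W s ≤ ∑ _i : Fin η, (1:ℝ) := Finset.sum_le_sum (fun i _ => (hY01 (s i)).2)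
      _ = η := by simp
  have h_int : Integrable (fun s => Real.exp (t * W s)) μ := by
    refine Integrable.mono' (integrable_const (Real.exp (t * η))) ?_ ?_
    · exact ((hWmeas.const_mul t).exp).aestronglyMeasurable
    · filter_upwards with s
      rw [Real.norm_eq_abs, abs_of_pos (Real.exp_pos _)]
      exact Real.exp_le_exp.mpr (mul_le_mul_of_nonneg_left (hWle s) ht)
  have hchernoff := ProbabilityTheory.measure_ge_le_exp_mul_mgf (μ := μ) (X := W) c ht h_int
  refine le_trans hchernoff ?_
  have hmgf : mgf W μ t = (1 - (P A).toReal + (P A).toReal * Real.exp t) ^ η := by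
    have h1 : mgf W μ t = ∫ s, ∏ i, Real.exp (t * Y (s i)) ∂μ := by
      unfold ProbabilityTheory.mgf
      congr 1
      funext s
      simp only [hW, Finset.mul_sum, Real.exp_sum]
    rw [h1, pi_prod_integral P η (fun x => Real.exp (t * Y x))]
    congr 1
    have h2 : (fun x => Real.exp (t * Y x)) =
        fun x => 1 + A.indicator (fun _ => Real.exp t - 1) x := by
      funext x
      by_cases hx : x ∈ A
      · simp [hY, Set.indicator_of_mem hx]
      · simp [hY, Set.indicator_of_notMem hx]
    rw [h2, integral_add (integrable_const 1)
      ((integrable_const (Real.exp t - 1)).indicator hA), integral_indicator hA]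
    simp only [integral_const, measure_univ, ENNReal.toReal_one, Measure.real, one_smul, smul_eq_mul,
      setIntegral_const, Measure.restrict_apply_univ]
    ring
  rw [hmgf]

/-- `Threshold ξ s` is the largest `τ` such that at least a `ξ`-fraction of the scores
`s i` are `≥ τ`. -/
noncomputable def Threshold {η : ℕ} (ξ : ℝ) (s : Fin η → ℝ) : ℝ :=
  sSup {τ : ℝ | ξ ≤ ((Finset.univ.filter fun i => τ ≤ s i).card : ℝ) / η}

lemma threshold_mem {η : ℕ} (hη : 0 < η) {ξ : ℝ} (hξ : ξ ∈ Set.Ioc (0:ℝ) 1)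
    (s : Fin η → ℝ) :
    ξ ≤ ((Finset.univ.filter fun i => Threshold ξ s ≤ s i).card : ℝ) / η := by
  obtain ⟨hξ0, hξ1⟩ := hξ
  have hηR : (0:ℝ) < η := Nat.cast_pos.mpr hη
  set S : Set ℝ := {τ : ℝ | ξ ≤ ((Finset.univ.filter fun i => τ ≤ s i).card : ℝ) / η} with hS
  haveI : Nonempty (Fin η) := ⟨⟨0, hη⟩⟩
  have huniv : Finset.univ.Nonempty (α := Fin η) := Finset.univ_nonempty
  -- S is a finite union of Iic's
  have hSeq : S = ⋃ i ∈ (Finset.univ.filter fun i =>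
      ξ ≤ ((Finset.univ.filter fun j => s i ≤ s j).card : ℝ) / η), Set.Iic (s i) := by
    ext τ
    simp only [Set.mem_iUnion, Finset.mem_filter, Finset.mem_univ, true_and, Set.mem_Iic,
      exists_prop, hS, Set.mem_setOf_eq]
    constructor
    · intro hτ
      have hpos : 0 < (Finset.univ.filter fun i => τ ≤ s i).card := by
        by_contra h
        push_neg at h
        interval_cases h' : (Finset.univ.filter fun i => τ ≤ s i).card
        · simp only [h', Nat.cast_zero, zero_div] at hτ
          linarith
      obtain ⟨i₀, hi₀⟩ := Finset.card_pos.mp hpos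
      -- choose i₀ minimizing s over the filter
      have hfil : (Finset.univ.filter fun i => τ ≤ s i).Nonempty := ⟨i₀, hi₀⟩
      obtain ⟨i₁, hi₁mem, hi₁min⟩ := Finset.exists_min_image _ s hfil
      have hτi₁ : τ ≤ s i₁ := (Finset.mem_filter.mp hi₁mem).2
      refine ⟨i₁, ?_, hτi₁⟩
      refine le_trans hτ ?_
      have hcard : ((Finset.univ.filter fun j => τ ≤ s j).card : ℝ) ≤
          ((Finset.univ.filter fun j => s i₁ ≤ s j).card : ℝ) := by
        exact_mod_cast Finset.card_le_card (by
          intro j hj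
          simp only [Finset.mem_filter, Finset.mem_univ, true_and] at hj ⊢
          exact hi₁min j (Finset.mem_filter.mpr ⟨Finset.mem_univ _, hj⟩))
      gcongr
    · rintro ⟨i, hi, hτi⟩
      refine le_trans hi ?_
      have hcard : ((Finset.univ.filter fun j => s i ≤ s j).card : ℝ) ≤
          ((Finset.univ.filter fun j => τ ≤ s j).card : ℝ) := by
        exact_mod_cast Finset.card_le_card (by
          intro j hj
          simp only [Finset.mem_filter, Finset.mem_univ, true_and] at hj ⊢
          exact le_trans hτi hj)
      gcongr
  have hclosed : IsClosed S := by
    rw [hSeq]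
    exact Set.Finite.isClosed_biUnion (Finset.finite_toSet _) (fun i _ => isClosed_Iic)
  have hne : S.Nonempty := by
    refine ⟨Finset.univ.inf' huniv s, ?_⟩
    have : (Finset.univ.filter fun i => Finset.univ.inf' huniv s ≤ s i) = Finset.univ := by
      apply Finset.filter_true_of_mem
      intro i _
      exact Finset.inf'_le s (Finset.mem_univ i)
    simp only [hS, Set.mem_setOf_eq, this, Finset.card_univ, Fintype.card_fin]
    rw [div_self (ne_of_gt hηR)]
    exact hξ1
  have hbdd : BddAbove S := by
    refine ⟨Finset.univ.sup' huniv s, ?_⟩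
    intro τ hτ
    simp only [hS, Set.mem_setOf_eq] at hτ
    by_contra h
    push_neg at h
    have : (Finset.univ.filter fun i => τ ≤ s i) = ∅ := by
      apply Finset.filter_false_of_mem
      intro i _
      push_neg
      exact lt_of_le_of_lt (Finset.le_sup' s (Finset.mem_univ i)) h
    rw [this] at hτ
    simp only [Finset.card_empty, Nat.cast_zero, zero_div] at hτ
    linarith
  have := hclosed.csSup_mem hne hbdd
  rw [hS] at this
  exact this

/-- **Coverage tuning.** Let `g̃(X₁), …, g̃(X_η)` be i.i.d. scores with common (atomless)
law `P`, and let `τ̂ := Threshold(ξ, {g̃(X₁), …, g̃(X_η)})`. Then for every `ε > 0`, the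
probability (over the draw of the sample) that the true coverage
`P(g̃(X) ≥ τ̂)` is at most `ξ − ε` is bounded by `exp(−2ηε²)`. -/
theorem coverage_tuning
    (P : Measure ℝ) [IsProbabilityMeasure P] (hP : ∀ x : ℝ, P {x} = 0)
    (η : ℕ) (hη : 0 < η) (ξ : ℝ) (hξ : ξ ∈ Set.Ioc (0:ℝ) 1)
    (ε : ℝ) (hε : 0 < ε) :
    Measure.pi (fun _ : Fin η => P)
        {s | (P {x | Threshold ξ s ≤ x}).toReal ≤ ξ - ε}
      ≤ ENNReal.ofReal (Real.exp (-2 * η * ε ^ 2)) := by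
  set u : ℝ := ξ - ε with hu
  set E : Set (Fin η → ℝ) := {s | (P {x | Threshold ξ s ≤ x}).toReal ≤ ξ - ε} with hE
  by_cases hu0 : 0 ≤ u
  swap
  · have hempty : E = ∅ := by
      ext s
      simp only [hE, Set.mem_setOf_eq, Set.mem_empty_iff_false, iff_false, not_le]
      calc ξ - ε = u := rfl
        _ < 0 := not_le.mp hu0
        _ ≤ _ := ENNReal.toReal_nonneg
    rw [hempty]
    simp
  have hηR : (0:ℝ) < η := Nat.cast_pos.mpr hη
  set G : ℝ → ℝ := fun x => (P (Set.Ici x)).toReal with hG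
  have hGanti : Antitone G := by
    intro x y hxy
    exact ENNReal.toReal_mono (measure_ne_top _ _) (measure_mono (Set.Ici_subset_Ici.mpr hxy))
  set A : Set ℝ := {x | G x ≤ u} with hA
  have hAmeas : MeasurableSet A := by
    have : A = G ⁻¹' Set.Iic u := rfl
    rw [this]
    exact hGanti.measurable measurableSet_Iic
  set p : ℝ := (P A).toReal with hp
  have hp0 : 0 ≤ p := ENNReal.toReal_nonneg
  have hp1 : p ≤ 1 := by
    apply ENNReal.toReal_le_of_le_ofReal zero_le_one
    simpa [ENNReal.ofReal_one] using prob_le_one (μ := P) (s := A)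
  have hpu : p ≤ u := ENNReal.toReal_le_of_le_ofReal hu0 (tail_bound P hP hu0)
  set t : ℝ := 4 * ε with htdef
  have ht : 0 ≤ t := by positivity
  set B : Set (Fin η → ℝ) :=
    {s | ξ * η ≤ ∑ i, A.indicator (fun _ => (1:ℝ)) (s i)} with hB
  have hEB : E ⊆ B := by
    intro s hs
    have hsG : G (Threshold ξ s) ≤ u := hs
    have hth := threshold_mem hη hξ s
    have hcard : ξ * η ≤ ((Finset.univ.filter fun i => Threshold ξ s ≤ s i).card : ℝ) :=
      (le_div_iff₀ hηR).mp hth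
    have hmem : ∀ i ∈ (Finset.univ.filter fun i => Threshold ξ s ≤ s i),
        A.indicator (fun _ => (1:ℝ)) (s i) = 1 := by
      intro i hi
      have hτ : Threshold ξ s ≤ s i := (Finset.mem_filter.mp hi).2
      have : s i ∈ A := le_trans (hGanti hτ) hsG
      simp [Set.indicator_of_mem this]
    have h1 : ((Finset.univ.filter fun i => Threshold ξ s ≤ s i).card : ℝ) =
        ∑ i ∈ (Finset.univ.filter fun i => Threshold ξ s ≤ s i),
          A.indicator (fun _ => (1:ℝ)) (s i) := by
      rw [Finset.sum_congr rfl hmem]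
      simp
    have h2 : ∑ i ∈ (Finset.univ.filter fun i => Threshold ξ s ≤ s i),
          A.indicator (fun _ => (1:ℝ)) (s i) ≤ ∑ i, A.indicator (fun _ => (1:ℝ)) (s i) := by
      apply Finset.sum_le_sum_of_subset_of_nonneg (Finset.filter_subset _ _)
      intro i _ _
      exact Set.indicator_nonneg (fun _ _ => zero_le_one) _
    show ξ * η ≤ _
    linarith
  set μ := Measure.pi (fun _ : Fin η => P) with hμ
  haveI : IsProbabilityMeasure μ := by
    rw [hμ]; infer_instance
  have hch := chernoff_pi P η hη A hAmeas t ht (ξ * η)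
  calc μ E ≤ μ B := measure_mono hEB
    _ = ENNReal.ofReal ((μ B).toReal) := (ENNReal.ofReal_toReal (measure_ne_top _ _)).symm
    _ ≤ ENNReal.ofReal (Real.exp (-t * (ξ * η)) * (1 - p + p * Real.exp t) ^ η) :=
        ENNReal.ofReal_le_ofReal hch
    _ ≤ ENNReal.ofReal (Real.exp (-2 * η * ε ^ 2)) := by
        apply ENNReal.ofReal_le_ofReal
        have hb := bern_mgf_le hp0 hp1 ht
        have hbpow : (1 - p + p * Real.exp t) ^ η ≤ Real.exp (t * p + t ^ 2 / 8) ^ η :=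
          pow_le_pow_left₀ (le_of_lt (denom_pos hp0 hp1 t)) hb η
        have hexp : Real.exp (t * p + t ^ 2 / 8) ^ η = Real.exp (η * (t * p + t ^ 2 / 8)) := by
          rw [← Real.exp_nat_mul]
        calc Real.exp (-t * (ξ * η)) * (1 - p + p * Real.exp t) ^ η
            ≤ Real.exp (-t * (ξ * η)) * Real.exp (η * (t * p + t ^ 2 / 8)) := by
              rw [← hexp]
              exact mul_le_mul_of_nonneg_left hbpow (le_of_lt (Real.exp_pos _))
          _ = Real.exp (-t * (ξ * η) + η * (t * p + t ^ 2 / 8)) := (Real.exp_add _ _).symm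
          _ ≤ Real.exp (-2 * η * ε ^ 2) := by
              apply Real.exp_le_exp.mpr
              have hkey : 4 * ε * (η:ℝ) * (p - ξ) ≤ 4 * ε * (η:ℝ) * (-ε) :=
                mul_le_mul_of_nonneg_left (by simp only [hu] at hpu; linarith)
                  (by positivity)
              simp only [htdef]
              nlinarith [hηR, hε]
end

section
/- If k is a bounded kernel with K := sup_{α∈[0,1]} k(α,α) < ∞, then S-MMCE_u(f,g;q,k,P) ≤ K^{1/(2q)} · (E[|Y − V|^q])^{1/q}, where (V,Y) is distributed as (f(X),Y) given g(X)=1; in particular for q = 2 the S-MMCE_u is at most K^{1/4} times the square root of the selective Brier score. -/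
open MeasureTheory ProbabilityTheory
open scoped RealInnerProductSpace

/-- **S-MMCE_u bounded by the selective `q`-th moment.** If the kernel
`k(α,α) = ⟪φ α, φ α⟫` is bounded on `[0,1]` with supremum `K` (expressed via `IsLUB`),
then `S-MMCE_u(f,g;q,k,P) ≤ K^{1/(2q)} · (E[|Y − V|^q])^{1/q}`, where `(V, Y)` is
distributed as `(f(X), Y)` under the conditional law given `g(X)=1`.  (In particular,
for `q = 2` the S-MMCE_u is at most `K^{1/4}` times the square root of the selective
Brier score.) -/
theorem smmce_u_le_moment
    {Ω : Type*} [MeasurableSpace Ω] (μ : Measure Ω) [IsProbabilityMeasure μ]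
    {H : Type*} [NormedAddCommGroup H] [InnerProductSpace ℝ H] [CompleteSpace H]
    (φ : ℝ → H)
    (K : ℝ) (hK : IsLUB ((fun α => ⟪φ α, φ α⟫) '' Set.Icc (0:ℝ) 1) K)
    (f Y : Ω → ℝ) (g : Ω → Bool)
    (hf : Measurable f) (hY : Measurable Y) (hg : Measurable g)
    (hfr : ∀ ω, f ω ∈ Set.Icc (0:ℝ) 1) (hYr : ∀ ω, Y ω = 0 ∨ Y ω = 1)
    (hcov : 0 < μ {ω | g ω = true})
    (q : ℝ) (hq : 1 ≤ q) :
    ‖∫ ω, |Y ω - f ω| ^ q • φ (f ω) ∂(ProbabilityTheory.cond μ {ω | g ω = true})‖ ^ (1/q)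
      ≤ K ^ (1/(2*q)) *
        (∫ ω, |Y ω - f ω| ^ q ∂(ProbabilityTheory.cond μ {ω | g ω = true})) ^ (1/q) := by
  set ν := ProbabilityTheory.cond μ {ω | g ω = true} with hν
  have hq0 : (0:ℝ) < q := lt_of_lt_of_le one_pos hq
  have hK0 : (0:ℝ) ≤ K := by
    have h0 : ⟪φ 0, φ 0⟫ ∈ (fun α => ⟪φ α, φ α⟫) '' Set.Icc (0:ℝ) 1 :=
      Set.mem_image_of_mem _ (Set.left_mem_Icc.mpr one_pos.le)
    exact le_trans real_inner_self_nonneg (hK.1 h0)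
  have hφ : ∀ ω, ‖φ (f ω)‖ ≤ Real.sqrt K := by
    intro ω
    have h1 : ⟪φ (f ω), φ (f ω)⟫ ≤ K := hK.1 (Set.mem_image_of_mem _ (hfr ω))
    have h2 : ⟪φ (f ω), φ (f ω)⟫ = ‖φ (f ω)‖ ^ 2 := real_inner_self_eq_norm_sq _
    nlinarith [Real.sq_sqrt hK0, Real.sqrt_nonneg K, norm_nonneg (φ (f ω))]
  have hw0 : ∀ ω, 0 ≤ |Y ω - f ω| ^ q := fun ω => Real.rpow_nonneg (abs_nonneg _) q
  have hw1 : ∀ ω, |Y ω - f ω| ^ q ≤ 1 := by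
    intro ω
    apply Real.rpow_le_one (abs_nonneg _) _ hq0.le
    obtain ⟨h0, h1⟩ := hfr ω
    rcases hYr ω with h | h <;> rw [h, abs_le] <;> constructor <;> linarith
  have hmeas : Measurable fun ω => |Y ω - f ω| ^ q :=
    (Real.continuous_rpow_const hq0.le).measurable.comp ((hY.sub hf).abs)
  haveI : IsProbabilityMeasure ν := cond_isProbabilityMeasure hcov.ne'
  have hint : Integrable (fun ω => |Y ω - f ω| ^ q) ν := by
    apply Integrable.mono' (integrable_const 1) hmeas.aestronglyMeasurable
    filter_upwards with ω
    rw [Real.norm_eq_abs, abs_of_nonneg (hw0 ω)]; exact hw1 ω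
  have hI0 : (0:ℝ) ≤ ∫ ω, |Y ω - f ω| ^ q ∂ν := integral_nonneg hw0
  have step1 : ‖∫ ω, |Y ω - f ω| ^ q • φ (f ω) ∂ν‖
      ≤ Real.sqrt K * ∫ ω, |Y ω - f ω| ^ q ∂ν := by
    calc ‖∫ ω, |Y ω - f ω| ^ q • φ (f ω) ∂ν‖
        ≤ ∫ ω, ‖|Y ω - f ω| ^ q • φ (f ω)‖ ∂ν := norm_integral_le_integral_norm _
      _ ≤ ∫ ω, Real.sqrt K * |Y ω - f ω| ^ q ∂ν := by
          apply integral_mono_of_nonneg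
          · filter_upwards with ω; positivity
          · exact hint.const_mul _
          · filter_upwards with ω
            rw [norm_smul, Real.norm_eq_abs, abs_of_nonneg (hw0 ω)]
            calc |Y ω - f ω| ^ q * ‖φ (f ω)‖
                ≤ |Y ω - f ω| ^ q * Real.sqrt K :=
                  mul_le_mul_of_nonneg_left (hφ ω) (hw0 ω)
              _ = Real.sqrt K * |Y ω - f ω| ^ q := mul_comm _ _
      _ = Real.sqrt K * ∫ ω, |Y ω - f ω| ^ q ∂ν := integral_const_mul _ _
  have step2 := Real.rpow_le_rpow (norm_nonneg _) step1 (by positivity : (0:ℝ) ≤ 1/q)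
  refine le_trans step2 ?_
  rw [Real.mul_rpow (Real.sqrt_nonneg K) hI0, Real.sqrt_eq_rpow,
    ← Real.rpow_mul hK0, show (1/2)*(1/q) = 1/(2*q) from by ring]
end
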